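/- Let d ≥ 1, h > 0, R > 0, L > 0, and let φ : [0,L] → ℝ^d be a 1-Lipschitz curve. Let G ⊆ h·ℤ^d be a set of lattice points such that every g ∈ G satisfies ‖g − φ(t)‖ ≤ R for some t ∈ [0,L] (Euclidean norm). Then G is finite and its cardinality satisfies card(G) ≤ (⌈L/R⌉ + 2) · ((3R + h)/h)^d. -/

import Mathlib

open Set Metric MeasureTheory
open scoped ENNReal

noncomputable section

/-- Points of the `d`-dimensional Euclidean space. -/
abbrev Pt (d : ℕ) := EuclideanSpace ℝ (Fin d)

/-- A control: a measurable map valued in the unit sphere. -/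
def IsControl {d : ℕ} (α : ℝ → Pt d) : Prop :=
  Measurable α ∧ ∀ t, ‖α t‖ = 1

/-- Admissible trajectory (in integral form, i.e. an absolutely continuous solution of the
controlled ODE) with control `α`, constrained to stay in `K`, with direction sign `σ`
(`σ = 1`: forward dynamics `y' = f(y,α)·α`; `σ = -1`: reverse dynamics `y' = -f(y,α)·α`),
starting at `x`, with horizon `τ`. -/
def IsTrajCtrl {d : ℕ} (K : Set (Pt d)) (f : Pt d → Pt d → ℝ) (σ : ℝ)
    (x : Pt d) (τ : ℝ) (y α : ℝ → Pt d) : Prop :=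
  0 ≤ τ ∧ y 0 = x ∧ (∀ t ∈ Icc 0 τ, y t ∈ K) ∧ IsControl α ∧
    ∀ t ∈ Icc 0 τ, y t = x + ∫ s in (0:ℝ)..t, (σ * f (y s) (α s)) • α s

/-- Admissible trajectory, for some control. -/
def IsTraj {d : ℕ} (K : Set (Pt d)) (f : Pt d → Pt d → ℝ) (σ : ℝ)
    (x : Pt d) (τ : ℝ) (y : ℝ → Pt d) : Prop :=
  ∃ α, IsTrajCtrl K f σ x τ y α

/-- Set of horizons of admissible trajectories from `x` ending in `target`. -/
def reachTimes {d : ℕ} (K : Set (Pt d)) (f : Pt d → Pt d → ℝ) (σ : ℝ)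
    (target : Set (Pt d)) (x : Pt d) : Set ℝ :=
  {τ | ∃ y : ℝ → Pt d, IsTraj K f σ x τ y ∧ y τ ∈ target}

/-- Minimum time, `∞` if the target is unreachable (`inf ∅ = ∞`). -/
def minTime {d : ℕ} (K : Set (Pt d)) (f : Pt d → Pt d → ℝ) (σ : ℝ)
    (target : Set (Pt d)) (x : Pt d) : ℝ≥0∞ :=
  ⨅ τ ∈ reachTimes K f σ target x, ENNReal.ofReal τ

/-- Kruzkov transform `1 - e^{-T}`, with the convention `e^{-∞} = 0`. -/
def kruzkov (T : ℝ≥0∞) : ℝ := if T = ∞ then 1 else 1 - Real.exp (-T.toReal)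

/-- Value function (Kruzkov transform of the minimum time). -/
def val {d : ℕ} (K : Set (Pt d)) (f : Pt d → Pt d → ℝ) (σ : ℝ)
    (target : Set (Pt d)) (x : Pt d) : ℝ :=
  kruzkov (minTime K f σ target x)

/-- Geodesic points from `x`: points `y(t)` of optimal trajectories from `x` to `target`. -/
def geodPts {d : ℕ} (K : Set (Pt d)) (f : Pt d → Pt d → ℝ) (σ : ℝ)
    (target : Set (Pt d)) (x : Pt d) : Set (Pt d) :=
  {p | ∃ τ y, IsTraj K f σ x τ y ∧ y τ ∈ target ∧
    ENNReal.ofReal τ = minTime K f σ target x ∧ ∃ t ∈ Icc 0 τ, p = y t}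

/-- δ-geodesic points from `x`: points `y(t)` of δ-optimal trajectories from `x` to `target`. -/
def deltaGeodPts {d : ℕ} (K : Set (Pt d)) (f : Pt d → Pt d → ℝ) (σ : ℝ)
    (target : Set (Pt d)) (x : Pt d) (δ : ℝ) : Set (Pt d) :=
  {p | ∃ τ y, IsTraj K f σ x τ y ∧ y τ ∈ target ∧
    1 - Real.exp (-τ) ≤ val K f σ target x + δ ∧ ∃ t ∈ Icc 0 τ, p = y t}

/-- The setting of the minimum time problem: a nonempty bounded open domain `Ω ⊆ ℝ^d` with
`d ≥ 1`, a positive continuous bounded Lipschitz speed function `f` on `cl(Ω) × S₁`, and two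
disjoint nonempty compact subsets `K_src, K_dst` of `Ω`. -/
structure Setting (d : ℕ) where
  Ω : Set (Pt d)
  f : Pt d → Pt d → ℝ
  Mf : ℝ
  Lf : ℝ
  Lfa : ℝ
  Ksrc : Set (Pt d)
  Kdst : Set (Pt d)
  hd : 1 ≤ d
  hΩopen : IsOpen Ω
  hΩbdd : Bornology.IsBounded Ω
  hΩne : Ω.Nonempty
  hfcont : ContinuousOn (fun p : Pt d × Pt d => f p.1 p.2) (closure Ω ×ˢ sphere (0 : Pt d) 1)
  hfpos : ∀ x ∈ closure Ω, ∀ a ∈ sphere (0 : Pt d) 1, 0 < f x a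
  hfbdd : ∀ x ∈ closure Ω, ∀ a ∈ sphere (0 : Pt d) 1, f x a ≤ Mf
  hfLipx : ∀ a ∈ sphere (0 : Pt d) 1, ∀ x ∈ closure Ω, ∀ x' ∈ closure Ω,
    |f x a - f x' a| ≤ Lf * ‖x - x'‖
  hfLipa : ∀ x ∈ closure Ω, ∀ a ∈ sphere (0 : Pt d) 1, ∀ a' ∈ sphere (0 : Pt d) 1,
    |f x a - f x a'| ≤ Lfa * ‖a - a'‖
  hKsrcComp : IsCompact Ksrc
  hKdstComp : IsCompact Kdst
  hKsrcNe : Ksrc.Nonempty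
  hKdstNe : Kdst.Nonempty
  hKsrcSub : Ksrc ⊆ Ω
  hKdstSub : Kdst ⊆ Ω
  hKdisj : Disjoint Ksrc Kdst

namespace Setting

variable {d : ℕ} (S : Setting d)

/-- Minimum time to destination `T_→d`. -/
def Td (x : Pt d) : ℝ≥0∞ := minTime (closure S.Ω) S.f 1 S.Kdst x

/-- Minimum time from source `T_s←` (reverse dynamics). -/
def Ts (x : Pt d) : ℝ≥0∞ := minTime (closure S.Ω) S.f (-1) S.Ksrc x

/-- Value function to destination `v_→d = 1 - e^{-T_→d}`. -/
def vd (x : Pt d) : ℝ := val (closure S.Ω) S.f 1 S.Kdst x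

/-- Value function from source `v_s← = 1 - e^{-T_s←}`. -/
def vs (x : Pt d) : ℝ := val (closure S.Ω) S.f (-1) S.Ksrc x

/-- State-constrained value function to destination: trajectories confined to `K`. -/
def vdC (K : Set (Pt d)) (x : Pt d) : ℝ := val K S.f 1 S.Kdst x

/-- State-constrained value function from source: trajectories confined to `K`. -/
def vsC (K : Set (Pt d)) (x : Pt d) : ℝ := val K S.f (-1) S.Ksrc x

/-- `F_v(x) = v_s←(x) + v_→d(x) − v_s←(x)·v_→d(x)`. -/
def Fv (x : Pt d) : ℝ := S.vs x + S.vd x - S.vs x * S.vd x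

/-- The neighborhood `O_η` of the optimal trajectories. -/
def Oset (η : ℝ) : Set (Pt d) :=
  {x ∈ S.Ω \ (S.Ksrc ∪ S.Kdst) | S.Fv x < sInf (S.Fv '' S.Ω) + η}

/-- `X_src = Argmin_{x ∈ K_src} v_→d(x)`. -/
def Xsrc : Set (Pt d) := {x ∈ S.Ksrc | ∀ z ∈ S.Ksrc, S.vd x ≤ S.vd z}

/-- `X_dst = Argmin_{x ∈ K_dst} v_s←(x)`. -/
def Xdst : Set (Pt d) := {x ∈ S.Kdst | ∀ z ∈ S.Kdst, S.vs x ≤ S.vs z}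

/-- The set of forward geodesic points `∪_{x ∈ X_src} Γ*_x`. -/
def GammaFwd : Set (Pt d) := ⋃ x ∈ S.Xsrc, geodPts (closure S.Ω) S.f 1 S.Kdst x

/-- The set of reverse geodesic points `∪_{x ∈ X_dst} Γ̃*_x`. -/
def GammaRev : Set (Pt d) := ⋃ x ∈ S.Xdst, geodPts (closure S.Ω) S.f (-1) S.Ksrc x

/-- `v* = inf_{x ∈ K_src} v_→d(x)`. -/
def vStar : ℝ := sInf (S.vd '' S.Ksrc)

/-- `X_src^δ = {x ∈ ∂K_src : v_→d(x) ≤ v* + δ}`. -/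
def XsrcD (δ : ℝ) : Set (Pt d) := {x ∈ frontier S.Ksrc | S.vd x ≤ S.vStar + δ}

/-- `X_dst^δ = {x ∈ ∂K_dst : v_s←(x) ≤ v* + δ}`. -/
def XdstD (δ : ℝ) : Set (Pt d) := {x ∈ frontier S.Kdst | S.vs x ≤ S.vStar + δ}

/-- The set of forward δ-geodesic points `Γ^δ`. -/
def GammaD (δ : ℝ) : Set (Pt d) :=
  ⋃ δ' ∈ Icc (0:ℝ) δ, ⋃ x ∈ S.XsrcD (δ - δ'), deltaGeodPts (closure S.Ω) S.f 1 S.Kdst x δ'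

/-- The set of reverse δ-geodesic points. -/
def GammaDRev (δ : ℝ) : Set (Pt d) :=
  ⋃ δ' ∈ Icc (0:ℝ) δ, ⋃ x ∈ S.XdstD (δ - δ'), deltaGeodPts (closure S.Ω) S.f (-1) S.Ksrc x δ'

end Setting

/-- Auxiliary: a coordinate of a Euclidean vector is bounded by its norm. -/
lemma aux_coord_le_norm {d : ℕ} (p : Pt d) (i : Fin d) : |p i| ≤ ‖p‖ := by
  rw [EuclideanSpace.norm_eq]
  have h1 : |p i| = Real.sqrt (‖p i‖ ^ 2) := by
    rw [Real.sqrt_sq_eq_abs]; simp [Real.norm_eq_abs]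
  rw [h1]
  apply Real.sqrt_le_sqrt
  exact Finset.single_le_sum (fun j _ => sq_nonneg ‖p j‖) (Finset.mem_univ i)

set_option maxHeartbeats 1000000 in
/-- lattice-point counting in a tube of radius `R` around a 1-Lipschitz curve:
any set `G` of points of the lattice `h·ℤ^d` all lying within distance `R` of the curve
`φ : [0,L] → ℝ^d` is finite, with `card(G) ≤ (⌈L/R⌉ + 2)·((3R+h)/h)^d`. -/
theorem lattice_tube_counting (d : ℕ) (hd : 1 ≤ d)
    (h R L : ℝ) (hh : 0 < h) (hR : 0 < R) (hL : 0 < L)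
    (φ : ℝ → Pt d) (hφ : LipschitzOnWith 1 φ (Icc 0 L))
    (G : Set (Pt d))
    (hlat : ∀ g ∈ G, ∀ i : Fin d, ∃ z : ℤ, g i = h * z)
    (htube : ∀ g ∈ G, ∃ t ∈ Icc (0:ℝ) L, ‖g - φ t‖ ≤ R) :
    G.Finite ∧ (G.ncard : ℝ) ≤ ((⌈L / R⌉₊ : ℝ) + 2) * ((3 * R + h) / h) ^ d := by
  classical
  set N : ℕ := ⌈L / R⌉₊ with hN
  set B : ℝ := (3 * R + h) / h with hB
  have hB1 : (1:ℝ) ≤ B := by rw [hB, le_div_iff₀ hh]; nlinarith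
  have hB0 : (0:ℝ) ≤ B := le_trans zero_le_one hB1
  set c : ℕ → Pt d := fun k => φ (min (k * R) L) with hc
  set T : ℕ → Finset (Fin d → ℤ) := fun k =>
    Fintype.piFinset fun i => Finset.Icc ⌈(c k i - 3 * R / 2) / h⌉ ⌊(c k i + 3 * R / 2) / h⌋
    with hT
  set ψ : Pt d → (Fin d → ℤ) := fun p i => ⌊p i / h⌋ with hψdef
  have hψ : ∀ g ∈ G, ∀ i, h * (ψ g i : ℝ) = g i := by
    intro g hg i
    obtain ⟨z, hz⟩ := hlat g hg i
    have hfl : (⌊g i / h⌋ : ℤ) = z := by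
      rw [hz, mul_comm, mul_div_assoc, div_self hh.ne', mul_one, Int.floor_intCast]
    simp only [hψdef, hfl]
    exact hz.symm
  have hinj : Set.InjOn ψ G := by
    intro a ha b hb hab
    ext i
    have h1 := hψ a ha i
    have h2 := hψ b hb i
    rw [← h1, ← h2, hab]
  -- covering
  have hcov : ∀ g ∈ G, ∃ k ≤ N, ψ g ∈ T k := by
    intro g hg
    obtain ⟨t, ht, hgt⟩ := htube g hg
    obtain ⟨ht0, htL⟩ := ht
    set k : ℕ := ⌊t / R + 1 / 2⌋₊ with hk
    have hx0 : (0:ℝ) ≤ t / R + 1 / 2 := by positivity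
    have hk1 : (k : ℝ) ≤ t / R + 1 / 2 := Nat.floor_le hx0
    have hk2 : t / R + 1 / 2 < (k : ℝ) + 1 := Nat.lt_floor_add_one _
    have hkN : k ≤ N := by
      have hLR : (L / R : ℝ) ≤ (N : ℝ) := Nat.le_ceil _
      have hdiv : t / R ≤ L / R := by gcongr
      have : (k : ℝ) < (N : ℝ) + 1 := by linarith
      exact_mod_cast Nat.lt_succ_iff.mp (by exact_mod_cast this)
    refine ⟨k, hkN, ?_⟩
    -- |t - min (k*R) L| ≤ R/2
    have hkR1 : (k : ℝ) * R ≤ t + R / 2 := by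
      have h0 := mul_le_mul_of_nonneg_right hk1 hR.le
      have he : (t / R + 1 / 2) * R = t + R / 2 := by field_simp
      rw [he] at h0
      exact h0
    have hkR2 : t - R / 2 < (k : ℝ) * R := by
      have := mul_lt_mul_of_pos_right hk2 hR
      have he : (t / R + 1 / 2) * R = t + R / 2 := by field_simp
      rw [he] at this
      nlinarith
    set s : ℝ := min ((k : ℝ) * R) L with hs
    have hsIcc : s ∈ Icc (0:ℝ) L := by
      constructor
      · exact le_min (by positivity) hL.le
      · exact min_le_right _ _
    have hts : |t - s| ≤ R / 2 := by
      rcases le_total ((k:ℝ) * R) L with hle | hle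
      · rw [hs, min_eq_left hle, abs_le]; constructor <;> linarith
      · rw [hs, min_eq_right hle, abs_le]; constructor <;> linarith
    have hlip : dist (φ t) (φ s) ≤ R / 2 := by
      have h0 := hφ.dist_le_mul t ⟨ht0, htL⟩ s hsIcc
      rw [Real.dist_eq] at h0
      have h1 : dist (φ t) (φ s) ≤ |t - s| := by simpa using h0
      linarith
    have hnorm : ‖g - c k‖ ≤ 3 * R / 2 := by
      have h1 : dist g (φ t) ≤ R := by rwa [dist_eq_norm]
      have h2 : dist g (c k) ≤ dist g (φ t) + dist (φ t) (c k) := dist_triangle _ _ _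
      have h3 : dist (φ t) (c k) ≤ R / 2 := by rw [hc]; exact hlip
      rw [← dist_eq_norm]
      linarith
    -- coordinates
    rw [hT]
    simp only [Fintype.mem_piFinset, Finset.mem_Icc]
    intro i
    have hcoord : |g i - c k i| ≤ 3 * R / 2 := by
      have h1 : |(g - c k) i| ≤ ‖g - c k‖ := aux_coord_le_norm _ i
      have h2 : (g - c k) i = g i - c k i := rfl
      rw [h2] at h1
      linarith
    have hgi : g i = h * (ψ g i : ℝ) := (hψ g hg i).symm
    rw [abs_le] at hcoord
    constructor
    · rw [Int.ceil_le]
      rw [div_le_iff₀ hh]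
      push_cast
      rw [mul_comm]
      linarith [hcoord.1, hgi]
    · rw [Int.le_floor]
      rw [le_div_iff₀ hh]
      push_cast
      rw [mul_comm]
      linarith [hcoord.2, hgi]
  -- finiteness and cardinality
  set F : Finset (Fin d → ℤ) := (Finset.range (N + 1)).biUnion T with hF
  have himg : ψ '' G ⊆ ↑F := by
    rintro _ ⟨g, hg, rfl⟩
    obtain ⟨k, hkN, hmem⟩ := hcov g hg
    rw [hF]
    simp only [Finset.coe_biUnion, Finset.coe_range, Set.mem_iUnion]
    exact ⟨k, Nat.lt_succ_of_le hkN, hmem⟩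
  have himgfin : (ψ '' G).Finite := Set.Finite.subset F.finite_toSet himg
  have hGfin : G.Finite := Set.Finite.of_finite_image himgfin hinj
  refine ⟨hGfin, ?_⟩
  have hcard1 : G.ncard = (ψ '' G).ncard := (Set.ncard_image_of_injOn hinj).symm
  have hcard2 : (ψ '' G).ncard ≤ F.card := by
    have := Set.ncard_le_ncard himg F.finite_toSet
    rwa [Set.ncard_coe_finset] at this
  have hTcard : ∀ k, ((T k).card : ℝ) ≤ B ^ d := by
    intro k
    rw [hT]
    rw [Fintype.card_piFinset]
    push_cast
    calc (∏ i : Fin d, ((Finset.Icc ⌈(c k i - 3 * R / 2) / h⌉ ⌊(c k i + 3 * R / 2) / h⌋).card : ℝ))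
        ≤ ∏ i : Fin d, B := by
          apply Finset.prod_le_prod
          · intro i _; positivity
          · intro i _
            rw [Int.card_Icc]
            set a : ℤ := ⌈(c k i - 3 * R / 2) / h⌉ with ha
            set b : ℤ := ⌊(c k i + 3 * R / 2) / h⌋ with hb
            rcases le_or_gt (b + 1 - a) 0 with hle | hlt
            · rw [Int.toNat_of_nonpos hle]; simpa using hB0
            · have hc2 : (((b + 1 - a).toNat : ℕ) : ℝ) = (b : ℝ) + 1 - (a : ℝ) := by
                have := Int.toNat_of_nonneg hlt.le
                exact_mod_cast congrArg (Int.cast : ℤ → ℝ) this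
              rw [hc2]
              have h1 : (b : ℝ) ≤ (c k i + 3 * R / 2) / h := Int.floor_le _
              have h2 : (c k i - 3 * R / 2) / h ≤ (a : ℝ) := Int.le_ceil _
              have h3 : (c k i + 3 * R / 2) / h - (c k i - 3 * R / 2) / h + 1 = B := by
                rw [hB]; field_simp; ring
              linarith
      _ = B ^ d := by simp
  have hFcard : (F.card : ℝ) ≤ ((N : ℝ) + 1) * B ^ d := by
    have h1 : F.card ≤ ∑ k ∈ Finset.range (N + 1), (T k).card := Finset.card_biUnion_le
    have h2 : ((∑ k ∈ Finset.range (N + 1), (T k).card : ℕ) : ℝ)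
        ≤ ∑ k ∈ Finset.range (N + 1), B ^ d := by
      push_cast
      exact Finset.sum_le_sum fun k _ => hTcard k
    calc (F.card : ℝ) ≤ ((∑ k ∈ Finset.range (N + 1), (T k).card : ℕ) : ℝ) := by
          exact_mod_cast h1
      _ ≤ ∑ k ∈ Finset.range (N + 1), B ^ d := h2
      _ = ((N : ℝ) + 1) * B ^ d := by
          rw [Finset.sum_const, Finset.card_range]; push_cast; ring
  have hBd : (0:ℝ) ≤ B ^ d := by positivity
  calc (G.ncard : ℝ) = ((ψ '' G).ncard : ℝ) := by rw [hcard1]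
    _ ≤ (F.card : ℝ) := by exact_mod_cast hcard2
    _ ≤ ((N : ℝ) + 1) * B ^ d := hFcard
    _ ≤ ((N : ℝ) + 2) * B ^ d := by nlinarith
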